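/- arXiv:2501.00480 — 2 statements merged into one kernel-verified Lean document; each statement's English description precedes it below -/
import Mathlib

section
/- Let L be the Laplacian of a directed graph on N follower nodes with nonnegative adjacency weights, and G₁, G₂ nonnegative diagonal pinning matrices such that every follower has a directed path from at least one pinned node (leader). Then Φ₁ + Φ₂, where Φ_k = ½L + G_k, is nonsingular. -/
open Matrix

/-- Nonsingularity of `Φ₁ + Φ₂ = ½L + G₁ + ½L + G₂` for a directed-graph
Laplacian `L = D − A` with nonnegative weights and nonnegative pinning gains,
assuming every follower is reachable from some pinned node. -/
theorem pinned_laplacian_nonsingular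
    (N : ℕ) (hN : 0 < N)
    (A : Matrix (Fin N) (Fin N) ℝ) (hA : ∀ i j, 0 ≤ A i j)
    (g₁ g₂ : Fin N → ℝ) (hg₁ : ∀ i, 0 ≤ g₁ i) (hg₂ : ∀ i, 0 ≤ g₂ i)
    (L : Matrix (Fin N) (Fin N) ℝ)
    (hL : L = Matrix.diagonal (fun i => ∑ j, A i j) - A)
    -- every follower i is reachable (along edges i ← j with `A i j > 0`)
    -- from some node j pinned to a leader
    (hreach : ∀ i : Fin N, ∃ j : Fin N,
      Relation.ReflTransGen (fun x y => 0 < A x y) i j ∧ 0 < g₁ j + g₂ j)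
    (Φ₁ Φ₂ : Matrix (Fin N) (Fin N) ℝ)
    (hΦ₁ : Φ₁ = (1 / 2 : ℝ) • L + Matrix.diagonal g₁)
    (hΦ₂ : Φ₂ = (1 / 2 : ℝ) • L + Matrix.diagonal g₂) :
    IsUnit (Φ₁ + Φ₂) := by
  classical
  subst hL hΦ₁ hΦ₂
  set d : Fin N → ℝ := fun i => ∑ j, A i j with hd
  set g : Fin N → ℝ := fun i => g₁ i + g₂ i with hg
  have hg0 : ∀ i, 0 ≤ g i := fun i => add_nonneg (hg₁ i) (hg₂ i)
  have hd0 : ∀ i, 0 ≤ d i := fun i => Finset.sum_nonneg fun j _ => hA i j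
  have hM : ((1 / 2 : ℝ) • (Matrix.diagonal d - A) + Matrix.diagonal g₁)
      + ((1 / 2 : ℝ) • (Matrix.diagonal d - A) + Matrix.diagonal g₂)
      = Matrix.diagonal (fun i => d i + g i) - A := by
    have h1 : Matrix.diagonal (fun i => d i + g i)
        = Matrix.diagonal d + Matrix.diagonal g₁ + Matrix.diagonal g₂ := by
      rw [← Matrix.diagonal_add, ← Matrix.diagonal_add, add_assoc]
    rw [h1]
    module
  rw [hM]
  set M : Matrix (Fin N) (Fin N) ℝ := Matrix.diagonal (fun i => d i + g i) - A with hMdef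
  rw [Matrix.isUnit_iff_isUnit_det, isUnit_iff_ne_zero]
  intro hdet
  obtain ⟨v, hv0, hMv⟩ := (Matrix.exists_mulVec_eq_zero_iff).2 hdet
  -- row equations
  have row : ∀ i, (d i + g i) * v i = ∑ j, A i j * v j := by
    intro i
    have h := congrFun hMv i
    simp only [hMdef, Matrix.mulVec, dotProduct, Matrix.sub_apply, Matrix.diagonal_apply,
      sub_mul, Finset.sum_sub_distrib, Pi.zero_apply, ite_mul, zero_mul,
      Finset.sum_ite_eq, Finset.mem_univ, if_true, sub_eq_zero] at h
    exact h
  -- pick index of maximal |v i|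
  obtain ⟨i₀, -, hmax⟩ := Finset.exists_max_image Finset.univ (fun i => |v i|)
    ⟨⟨0, hN⟩, Finset.mem_univ _⟩
  set m : ℝ := |v i₀| with hm
  have hmax' : ∀ j, |v j| ≤ m := fun j => hmax j (Finset.mem_univ j)
  have hmpos : 0 < m := by
    obtain ⟨k, hk⟩ := Function.ne_iff.1 hv0
    exact lt_of_lt_of_le (abs_pos.2 hk) (hmax' k)
  -- key propagation lemma
  have key : ∀ i, |v i| = m → g i = 0 ∧ ∀ j, 0 < A i j → |v j| = m := by
    intro i hi
    have habs : |∑ j, A i j * v j| ≤ ∑ j, A i j * |v j| := by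
      refine (Finset.abs_sum_le_sum_abs _ _).trans_eq ?_
      exact Finset.sum_congr rfl fun j _ => by rw [abs_mul, abs_of_nonneg (hA i j)]
    have hsum_le : ∑ j, A i j * |v j| ≤ d i * m := by
      rw [hd, Finset.sum_mul]
      exact Finset.sum_le_sum fun j _ =>
        mul_le_mul_of_nonneg_left (hmax' j) (hA i j)
    have h1 : (d i + g i) * m = |∑ j, A i j * v j| := by
      rw [← row i, abs_mul, abs_of_nonneg (add_nonneg (hd0 i) (hg0 i)), hi]
    have h2 : (d i + g i) * m ≤ d i * m := h1 ▸ habs.trans hsum_le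
    have hgi : g i = 0 := by
      have : g i * m ≤ 0 := by nlinarith
      have hle : g i ≤ 0 := by nlinarith [hg0 i]
      exact le_antisymm hle (hg0 i)
    refine ⟨hgi, ?_⟩
    -- equality in the chain forces |v j| = m wherever A i j > 0
    have hchain : d i * m ≤ ∑ j, A i j * |v j| := by
      have := h1
      rw [hgi, add_zero] at this
      exact this ▸ habs
    have hzero : ∑ j, A i j * (m - |v j|) = 0 := by
      have hexp : ∑ j, A i j * (m - |v j|) = d i * m - ∑ j, A i j * |v j| := by
        simp only [mul_sub, Finset.sum_sub_distrib, ← Finset.sum_mul, hd]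
      rw [hexp]
      linarith [le_antisymm hsum_le hchain]
    intro j hij
    have hterm := (Finset.sum_eq_zero_iff_of_nonneg
      (fun j _ => mul_nonneg (hA i j) (by linarith [hmax' j]))).1 hzero j (Finset.mem_univ j)
    have : m - |v j| = 0 := by
      rcases mul_eq_zero.1 hterm with h | h
      · exact absurd h (ne_of_gt hij)
      · exact h
    linarith
  -- propagate along the path to a pinned node
  obtain ⟨j, hpath, hpin⟩ := hreach i₀
  have hvj : |v j| = m := by
    clear hpin
    induction hpath with
    | refl => rfl
    | tail _ hbc ih => exact (key _ ih).2 _ hbc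
  have := (key j hvj).1
  have h2 : g₁ j + g₂ j = 0 := this
  linarith
end

section
/- Let Φ₁, Φ₂ be symmetric positive semidefinite N×N matrices with Φ₁ + Φ₂ positive definite, and let ω_{n,1}, ω_{n,2} ∈ ℝ be leader references. Then the equilibrium of the error system e = ω − (Φ₁+Φ₂)⁻¹(Φ₁·𝟙·ω_{n,1} + Φ₂·𝟙·ω_{n,2}) under the dynamics ω̇ = −C(Φ₁+Φ₂)e with C diagonal positive definite satisfies: e(t) → 0 exponentially as t → ∞. -/
open Real Matrix Filter

lemma quad_lower_aux (N : ℕ) (hN : 0 < N) (A : Matrix (Fin N) (Fin N) ℝ)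
    (hA : A.PosDef) :
    ∃ μ : ℝ, 0 < μ ∧ ∀ x : Fin N → ℝ, μ * ∑ i, x i ^ 2 ≤ x ⬝ᵥ A.mulVec x := by
  haveI : Nonempty (Fin N) := ⟨⟨0, hN⟩⟩
  set E := EuclideanSpace ℝ (Fin N)
  set f : E → ℝ := fun x => (x : Fin N → ℝ) ⬝ᵥ A.mulVec x with hf
  have hcont : Continuous f := by
    have hfe : f = fun x : E => ∑ i, x i * ∑ j, A i j * x j := by
      funext x; simp [hf, dotProduct, Matrix.mulVec]
    rw [hfe]
    refine continuous_finset_sum _ fun i _ => ?_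
    exact ((EuclideanSpace.proj i).continuous).mul
      (continuous_finset_sum _ fun j _ =>
        continuous_const.mul ((EuclideanSpace.proj j).continuous))
  have hpt : ((EuclideanSpace.single (⟨0, hN⟩ : Fin N) (1:ℝ)) : E) ∈ Metric.sphere (0:E) 1 := by
    simp [EuclideanSpace.norm_single]
  obtain ⟨x₀, hx₀mem, hx₀min⟩ :=
    (isCompact_sphere (0:E) 1).exists_isMinOn ⟨_, hpt⟩ hcont.continuousOn
  have hx₀norm : ‖x₀‖ = 1 := by simpa using hx₀mem
  have hx₀ne : x₀ ≠ 0 := by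
    intro h; rw [h] at hx₀norm; simp at hx₀norm
  have hx₀ne' : (x₀ : Fin N → ℝ) ≠ 0 := by
    intro h; exact hx₀ne (by ext i; exact congrFun h i)
  refine ⟨f x₀, by simpa using hA.dotProduct_mulVec_pos hx₀ne', ?_⟩
  intro x
  rcases eq_or_ne x 0 with rfl | hx
  · simp
  · set y : E := (EuclideanSpace.equiv (Fin N) ℝ).symm x with hy
    have hyne : y ≠ 0 := by
      intro h; apply hx; ext i; exact congrFun (congrArg (fun v : E => (v : Fin N → ℝ)) h) i
    have hny : 0 < ‖y‖ := norm_pos_iff.mpr hyne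
    set z : E := ‖y‖⁻¹ • y with hz
    have hzmem : z ∈ Metric.sphere (0:E) 1 := by
      simp [hz, norm_smul, abs_inv, abs_of_pos hny, inv_mul_cancel₀ hny.ne']
    have hmin : f x₀ ≤ f z := hx₀min hzmem
    have hfz : f z = ‖y‖⁻¹ ^ 2 * (x ⬝ᵥ A.mulVec x) := by
      have hzfun : (z : Fin N → ℝ) = ‖y‖⁻¹ • x := rfl
      show (z : Fin N → ℝ) ⬝ᵥ A.mulVec (z : Fin N → ℝ) = _
      rw [hzfun, Matrix.mulVec_smul, smul_dotProduct, dotProduct_smul,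
        smul_eq_mul, smul_eq_mul]
      ring
    have hnormsq : ‖y‖ ^ 2 = ∑ i, x i ^ 2 := by
      rw [EuclideanSpace.norm_eq, Real.sq_sqrt (by positivity)]
      exact Finset.sum_congr rfl fun i _ => by simp [sq_abs]; rfl
    rw [hfz] at hmin
    have h2 := mul_le_mul_of_nonneg_right hmin (le_of_lt (by positivity : (0:ℝ) < ‖y‖ ^ 2))
    calc f x₀ * ∑ i, x i ^ 2 = f x₀ * ‖y‖ ^ 2 := by rw [hnormsq]
      _ ≤ ‖y‖⁻¹ ^ 2 * (x ⬝ᵥ A.mulVec x) * ‖y‖ ^ 2 := h2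
      _ = x ⬝ᵥ A.mulVec x := by field_simp

/-- Lemma 1 (attack-free case): the containment error of the cooperative
secondary control converges to zero exponentially, since `−C(Φ₁+Φ₂)` is
Hurwitz. -/
theorem attack_free_containment_exponential
    (N : ℕ) (hN : 0 < N)
    (Φ₁ Φ₂ : Matrix (Fin N) (Fin N) ℝ)
    (hΦ₁ : Φ₁.PosSemidef) (hΦ₂ : Φ₂.PosSemidef)
    (hΦ : (Φ₁ + Φ₂).PosDef)
    (cvec : Fin N → ℝ) (hcvec : ∀ i, 0 < cvec i)
    (ωn1 ωn2 : ℝ)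
    (ω : ℝ → Fin N → ℝ)
    (e : ℝ → Fin N → ℝ)
    (he : ∀ t : ℝ, e t = fun i => ω t i -
      ((Φ₁ + Φ₂)⁻¹.mulVec
        (Φ₁.mulVec (fun _ => ωn1) + Φ₂.mulVec (fun _ => ωn2))) i)
    (hω : ∀ t : ℝ, ∀ i : Fin N,
      HasDerivAt (fun s => ω s i)
        ((-(Matrix.diagonal cvec * (Φ₁ + Φ₂))).mulVec (e t) i) t) :
    ∃ K lam : ℝ, 0 < K ∧ 0 < lam ∧
      ∀ t : ℝ, 0 ≤ t → ∀ i : Fin N, |e t i| ≤ K * Real.exp (-lam * t) := by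
  haveI : Nonempty (Fin N) := ⟨⟨0, hN⟩⟩
  set A := Φ₁ + Φ₂ with hA
  obtain ⟨μ, hμpos, hμ⟩ := quad_lower_aux N hN A hΦ
  set b : Fin N → ℝ := A⁻¹.mulVec (Φ₁.mulVec (fun _ => ωn1) + Φ₂.mulVec (fun _ => ωn2)) with hb
  -- derivative of e
  have hede : ∀ t i, HasDerivAt (fun s => e s i) (-(cvec i * A.mulVec (e t) i)) t := by
    intro t i
    have h1 : (fun s => e s i) = fun s => ω s i - b i := by
      funext s; rw [he s]
    have h2 := (hω t i).sub_const (b i)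
    rw [← h1] at h2
    refine h2.congr_deriv ?_
    symm
    rw [Matrix.neg_mulVec]
    simp only [Pi.neg_apply, neg_inj]
    rw [← Matrix.mulVec_mulVec]
    simp [Matrix.mulVec_diagonal]
  -- Lyapunov function
  set V : ℝ → ℝ := fun t => ∑ i, (e t i) ^ 2 * (cvec i)⁻¹ with hV
  have hVnonneg : ∀ t, 0 ≤ V t := fun t =>
    Finset.sum_nonneg fun i _ => mul_nonneg (sq_nonneg _) (inv_nonneg.mpr (hcvec i).le)
  have hVderiv : ∀ t, HasDerivAt V (-(2 * (e t ⬝ᵥ A.mulVec (e t)))) t := by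
    intro t
    have h : HasDerivAt V
        (∑ i, (2 : ℕ) * e t i ^ 1 * (-(cvec i * A.mulVec (e t) i)) * (cvec i)⁻¹) t :=
      HasDerivAt.fun_sum fun i _ => ((hede t i).pow 2).mul_const _
    convert h using 1
    rw [dotProduct, Finset.mul_sum, ← Finset.sum_neg_distrib]
    refine Finset.sum_congr rfl fun i _ => ?_
    have hci : cvec i ≠ 0 := (hcvec i).ne'
    field_simp
    ring
  -- constants
  obtain ⟨i₁, -, hmin⟩ := Finset.exists_min_image Finset.univ cvec ⟨⟨0,hN⟩, Finset.mem_univ _⟩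
  obtain ⟨i₂, -, hmax⟩ := Finset.exists_max_image Finset.univ cvec ⟨⟨0,hN⟩, Finset.mem_univ _⟩
  set cmin := cvec i₁ with hcmin
  set cmax := cvec i₂ with hcmax
  have hcminpos : 0 < cmin := hcvec i₁
  have hcmaxpos : 0 < cmax := hcvec i₂
  set k : ℝ := 2 * (μ * cmin) with hk
  have hkpos : 0 < k := by positivity
  -- g = V * exp(k t) is antitone
  set g : ℝ → ℝ := fun t => V t * Real.exp (k * t) with hg
  have hgderiv : ∀ t, HasDerivAt g
      ((-(2 * (e t ⬝ᵥ A.mulVec (e t)))) * Real.exp (k * t) + V t * (k * Real.exp (k * t))) t := by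
    intro t
    have hexp : HasDerivAt (fun s => Real.exp (k * s)) (Real.exp (k * t) * k) t :=
      by simpa using ((hasDerivAt_id t).const_mul k).exp
    have := (hVderiv t).mul hexp
    refine this.congr_deriv ?_
    ring
  have hgderiv_nonpos : ∀ t, (-(2 * (e t ⬝ᵥ A.mulVec (e t)))) * Real.exp (k * t)
      + V t * (k * Real.exp (k * t)) ≤ 0 := by
    intro t
    have h1 : μ * ∑ i, e t i ^ 2 ≤ e t ⬝ᵥ A.mulVec (e t) := hμ (e t)
    have h2 : k * V t ≤ 2 * (μ * ∑ i, e t i ^ 2) := by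
      have step : ∀ i : Fin N, k * (e t i ^ 2 * (cvec i)⁻¹) ≤ 2 * μ * e t i ^ 2 := by
        intro i
        have hci : 0 < cvec i := hcvec i
        have hle : cmin * (cvec i)⁻¹ ≤ 1 := by
          rw [mul_inv_le_iff₀ hci, one_mul]; exact hmin i (Finset.mem_univ i)
        calc k * (e t i ^ 2 * (cvec i)⁻¹)
            = 2 * μ * e t i ^ 2 * (cmin * (cvec i)⁻¹) := by rw [hk]; ring
          _ ≤ 2 * μ * e t i ^ 2 * 1 :=
              mul_le_mul_of_nonneg_left hle (by positivity)
          _ = 2 * μ * e t i ^ 2 := by ring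
      calc k * V t = ∑ i, k * (e t i ^ 2 * (cvec i)⁻¹) := by
            show k * ∑ i, (e t i) ^ 2 * (cvec i)⁻¹ = _
            rw [Finset.mul_sum]
        _ ≤ ∑ i, 2 * μ * e t i ^ 2 := Finset.sum_le_sum fun i _ => step i
        _ = 2 * (μ * ∑ i, e t i ^ 2) := by
            simp only [Finset.mul_sum]
            exact Finset.sum_congr rfl fun i _ => by ring
    have hexppos : 0 < Real.exp (k * t) := Real.exp_pos _
    have hkey : (-(2 * (e t ⬝ᵥ A.mulVec (e t)))) + V t * k ≤ 0 := by
      have h3 : 2 * (μ * ∑ i, e t i ^ 2) ≤ 2 * (e t ⬝ᵥ A.mulVec (e t)) := by linarith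
      have := h2.trans h3
      linarith
    calc (-(2 * (e t ⬝ᵥ A.mulVec (e t)))) * Real.exp (k * t) + V t * (k * Real.exp (k * t))
        = ((-(2 * (e t ⬝ᵥ A.mulVec (e t)))) + V t * k) * Real.exp (k * t) := by ring
      _ ≤ 0 := mul_nonpos_of_nonpos_of_nonneg hkey hexppos.le
  have hganti : Antitone g := by
    refine antitone_of_deriv_nonpos (fun t => (hgderiv t).differentiableAt) fun t => ?_
    rw [(hgderiv t).deriv]
    exact hgderiv_nonpos t
  -- conclude
  have hVbound : ∀ t, 0 ≤ t → V t ≤ V 0 * Real.exp (-(k * t)) := by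
    intro t ht
    have hle : V t * Real.exp (k * t) ≤ V 0 := by
      have := hganti ht
      simpa [hg] using this
    have hexppos : 0 < Real.exp (k * t) := Real.exp_pos _
    have : V t = V t * Real.exp (k * t) * (Real.exp (k * t))⁻¹ := by field_simp
    rw [this, Real.exp_neg]
    exact mul_le_mul_of_nonneg_right hle (inv_nonneg.mpr hexppos.le)
  refine ⟨Real.sqrt (cmax * V 0) + 1, μ * cmin,
    by have := Real.sqrt_nonneg (cmax * V 0); linarith,
    mul_pos hμpos hcminpos, ?_⟩
  intro t ht i
  have hcoord : e t i ^ 2 * (cvec i)⁻¹ ≤ V t :=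
    Finset.single_le_sum (f := fun j => e t j ^ 2 * (cvec j)⁻¹)
      (fun j _ => mul_nonneg (sq_nonneg _) (inv_nonneg.mpr (hcvec j).le))
      (Finset.mem_univ i)
  have hci : 0 < cvec i := hcvec i
  have h4 : e t i ^ 2 ≤ cvec i * V t := by
    have hm := mul_le_mul_of_nonneg_left hcoord hci.le
    calc e t i ^ 2 = cvec i * (e t i ^ 2 * (cvec i)⁻¹) := by field_simp
      _ ≤ cvec i * V t := hm
  have h3 : e t i ^ 2 ≤ cmax * V t := by
    have := mul_le_mul_of_nonneg_right (hmax i (Finset.mem_univ i)) (hVnonneg t)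
    linarith
  have h5 : e t i ^ 2 ≤ cmax * (V 0 * Real.exp (-(k * t))) :=
    h3.trans (mul_le_mul_of_nonneg_left (hVbound t ht) hcmaxpos.le)
  have habs : |e t i| ≤ Real.sqrt (cmax * V 0) * Real.exp (-(μ * cmin) * t) := by
    have hrw : |e t i| = Real.sqrt (e t i ^ 2) := (Real.sqrt_sq_eq_abs _).symm
    rw [hrw]
    have heq : cmax * (V 0 * Real.exp (-(k * t)))
        = (cmax * V 0) * (Real.exp (-(μ * cmin) * t)) ^ 2 := by
      rw [sq, ← Real.exp_add, hk,
        show -(μ * cmin) * t + -(μ * cmin) * t = -(2 * (μ * cmin) * t) by ring]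
      ring
    calc Real.sqrt (e t i ^ 2)
        ≤ Real.sqrt ((cmax * V 0) * (Real.exp (-(μ * cmin) * t)) ^ 2) := by
          apply Real.sqrt_le_sqrt; rw [← heq]; exact h5
      _ = Real.sqrt (cmax * V 0) * Real.exp (-(μ * cmin) * t) := by
          rw [Real.sqrt_mul (mul_nonneg hcmaxpos.le (hVnonneg 0)),
            Real.sqrt_sq (Real.exp_pos _).le]
  refine habs.trans ?_
  have hep : (0:ℝ) < Real.exp (-(μ * cmin) * t) := Real.exp_pos _
  nlinarith [Real.sqrt_nonneg (cmax * V 0)]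
end
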